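/- For every γ > 0, a configuration x ∈ ℝ^Λ is a stationary point of V_γ if and only if, setting u_n = (x_{n+1} − x_{n−1})/2 for n ∈ Λ, the pairs (x_n, u_n) form a period-N orbit of the map T₁, i.e. T₁(x_n, u_n) = (x_{n+1}, u_{n+1}) for all n ∈ Λ, where T₁(x,u) = (x′,u′) with x′ = x + u − γ^{-1} f(x) and u′ = u − γ^{-1}(f(x) + f(x′)). -/

import Mathlib

/-- Local double-well potential `U(ξ) = ξ⁴/4 − ξ²/2`. -/
noncomputable def U (ξ : ℝ) : ℝ := ξ^4/4 - ξ^2/2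

/-- The potential `V_γ(x) = Σᵢ U(xᵢ) + (γ/4) Σᵢ (x_{i+1} − x_i)²` on `ℝ^Λ`, `Λ = ℤ/Nℤ`. -/
noncomputable def V (N : ℕ) [NeZero N] (γ : ℝ) (x : ZMod N → ℝ) : ℝ :=
  (∑ i : ZMod N, U (x i)) + γ/4 * ∑ i : ZMod N, (x (i+1) - x i)^2

/-- The configuration `I⁺ = (1,…,1)`. -/
def Iplus (N : ℕ) : ZMod N → ℝ := fun _ => 1

/-- The configuration `I⁻ = (−1,…,−1)`. -/
def Iminus (N : ℕ) : ZMod N → ℝ := fun _ => -1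

/-- The configuration `O = (0,…,0)`. -/
def Opoint (N : ℕ) : ZMod N → ℝ := fun _ => 0

/-- The local drift `f(ξ) = ξ − ξ³ = −U′(ξ)`. -/
def fdrift (ξ : ℝ) : ℝ := ξ - ξ^3

/-- The set of stationary points of `V_γ`. -/
noncomputable def statPts (N : ℕ) [NeZero N] (γ : ℝ) : Set (ZMod N → ℝ) :=
  {x | fderiv ℝ (V N γ) x = 0}

/-- The Hessian matrix of `V_γ` at `x`. -/
noncomputable def hess (N : ℕ) [NeZero N] (γ : ℝ) (x : ZMod N → ℝ) :
    Matrix (ZMod N) (ZMod N) ℝ :=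
  Matrix.of fun i j => fderiv ℝ (fun y => fderiv ℝ (V N γ) y (Pi.single i 1)) x (Pi.single j 1)

open Classical in
/-- Number of negative eigenvalues of a real symmetric matrix. -/
noncomputable def negCount {n : Type*} [Fintype n] [DecidableEq n] (A : Matrix n n ℝ) : ℕ :=
  if h : A.IsHermitian then (Finset.univ.filter fun i => h.eigenvalues i < 0).card else 0

/-- `x` is a `k`-saddle of `V_γ`: a stationary point with nondegenerate Hessian having
exactly `k` negative eigenvalues. -/
noncomputable def IsKSaddle (N : ℕ) [NeZero N] (γ : ℝ) (k : ℕ) (x : ZMod N → ℝ) : Prop :=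
  fderiv ℝ (V N γ) x = 0 ∧ (hess N γ x).det ≠ 0 ∧ negCount (hess N γ x) = k

/-- The rotation `R(x₁,…,x_N) = (x₂,…,x_N,x₁)`. -/
def rotMap (N : ℕ) : Function.End (ZMod N → ℝ) := fun x i => x (i + 1)

/-- The mirror symmetry `S(x₁,…,x_N) = (x_N,…,x₁)`, i.e. `(Sx)_i = x_{1−i}` mod `N`. -/
def mirMap (N : ℕ) : Function.End (ZMod N → ℝ) := fun x i => x (1 - i)

/-- The point symmetry `C(x) = −x`. -/
def negMap (N : ℕ) : Function.End (ZMod N → ℝ) := fun x => -x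

/-- The symmetry group `G` generated by `R`, `S` and `C` (as a monoid of maps; since the
generators have finite order this coincides with the generated group). -/
def symGroup (N : ℕ) : Submonoid (Function.End (ZMod N → ℝ)) :=
  Submonoid.closure {rotMap N, mirMap N, negMap N}

/-- The orbit of a configuration `x` under the symmetry group `G`. -/
def Gorbit (N : ℕ) (x : ZMod N → ℝ) : Set (ZMod N → ℝ) :=
  {y | ∃ g ∈ symGroup N, g x = y}

/-- The bifurcation values `γ_M = (1 − cos(2πM/N))⁻¹`. -/
noncomputable def gammaM (N M : ℕ) : ℝ := (1 - Real.cos (2 * Real.pi * M / N))⁻¹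

/-- Complete elliptic integral of the first kind. -/
noncomputable def ellK (κ : ℝ) : ℝ :=
  ∫ t in (0:ℝ)..(Real.pi/2), 1 / Real.sqrt (1 - κ^2 * Real.sin t ^ 2)

/-- Complete elliptic integral of the second kind. -/
noncomputable def ellE (κ : ℝ) : ℝ :=
  ∫ t in (0:ℝ)..(Real.pi/2), Real.sqrt (1 - κ^2 * Real.sin t ^ 2)

/-- The twist map `T₁(x,u) = (x′,u′)`, `x′ = x + u − γ⁻¹ f(x)`,
`u′ = u − γ⁻¹ (f(x) + f(x′))`. -/
noncomputable def T1 (γ : ℝ) (p : ℝ × ℝ) : ℝ × ℝ :=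
  (p.1 + p.2 - γ⁻¹ * fdrift p.1,
   p.2 - γ⁻¹ * (fdrift p.1 + fdrift (p.1 + p.2 - γ⁻¹ * fdrift p.1)))

noncomputable def Lmap (N : ℕ) [NeZero N] (γ : ℝ) (x : ZMod N → ℝ) :
    (ZMod N → ℝ) →L[ℝ] ℝ :=
  (∑ i : ZMod N, (x i ^ 3 - x i) • ContinuousLinearMap.proj i) +
  (γ/4) • ∑ i : ZMod N, (2 * (x (i+1) - x i)) •
      (ContinuousLinearMap.proj (i+1) - ContinuousLinearMap.proj (R := ℝ) (φ := fun _ : ZMod N => ℝ) i)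

theorem hasDerivU (t : ℝ) : HasDerivAt U (t^3 - t) t := by
  have h : HasDerivAt U ((4:ℕ) * t ^ (4-1) / 4 - (2:ℕ) * t ^ (2-1) / 2) t :=
    ((hasDerivAt_pow 4 t).div_const 4).sub ((hasDerivAt_pow 2 t).div_const 2)
  convert h using 1
  push_cast
  ring

theorem hasFDerivV (N : ℕ) [NeZero N] (γ : ℝ) (x : ZMod N → ℝ) :
    HasFDerivAt (V N γ) (Lmap N γ x) x := by
  have h1 : HasFDerivAt (fun y : ZMod N → ℝ => ∑ i : ZMod N, U (y i))
      (∑ i : ZMod N, (x i ^ 3 - x i) • ContinuousLinearMap.proj (R := ℝ) (φ := fun _ : ZMod N => ℝ) i) x := by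
    apply HasFDerivAt.fun_sum
    intro i _
    exact (hasDerivU (x i)).comp_hasFDerivAt x
      (ContinuousLinearMap.proj (R := ℝ) (φ := fun _ : ZMod N => ℝ) i).hasFDerivAt
  have h2 : HasFDerivAt (fun y : ZMod N → ℝ => γ/4 * ∑ i : ZMod N, (y (i+1) - y i)^2)
      ((γ/4) • ∑ i : ZMod N, (2 * (x (i+1) - x i)) •
        (ContinuousLinearMap.proj (i+1) - ContinuousLinearMap.proj (R := ℝ) (φ := fun _ : ZMod N => ℝ) i)) x := by
    apply HasFDerivAt.const_mul
    apply HasFDerivAt.fun_sum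
    intro i _
    have hl : HasFDerivAt (fun y : ZMod N → ℝ => y (i+1) - y i)
        (ContinuousLinearMap.proj (i+1) - ContinuousLinearMap.proj (R := ℝ) (φ := fun _ : ZMod N => ℝ) i) x :=
      ((ContinuousLinearMap.proj (R := ℝ) (φ := fun _ : ZMod N => ℝ) (i+1)) -
        ContinuousLinearMap.proj i).hasFDerivAt
    have := (hasDerivAt_pow 2 (x (i+1) - x i)).comp_hasFDerivAt x hl
    convert this using 2
    push_cast
    · rfl
    · rfl
    · push_cast
      ring
  exact h1.add h2

theorem Lmap_single (N : ℕ) [NeZero N] (γ : ℝ) (x : ZMod N → ℝ) (n : ZMod N) :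
    Lmap N γ x (Pi.single n 1) =
      (x n ^ 3 - x n) + γ/2 * (x n - x (n-1)) - γ/2 * (x (n+1) - x n) := by
  simp only [Lmap, ContinuousLinearMap.add_apply, ContinuousLinearMap.coe_sum',
    Finset.sum_apply, ContinuousLinearMap.smul_apply, ContinuousLinearMap.proj_apply,
    ContinuousLinearMap.sub_apply, smul_eq_mul, Pi.single_apply]
  have hc : ∀ i : ZMod N, (i + 1 = n) = (i = n - 1) := by
    intro i
    simp [eq_sub_iff_add_eq]
  simp only [hc, mul_sub, mul_ite, mul_one, mul_zero, Finset.sum_sub_distrib, Finset.sum_ite_eq',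
    Finset.mem_univ, if_true, Finset.sum_add_distrib]
  ring


theorem grad_zero_iff (N : ℕ) [NeZero N] (γ : ℝ) (x : ZMod N → ℝ) :
    fderiv ℝ (V N γ) x = 0 ↔
      ∀ n : ZMod N,
        (x n ^ 3 - x n) + γ/2 * (x n - x (n-1)) - γ/2 * (x (n+1) - x n) = 0 := by
  rw [(hasFDerivV N γ x).fderiv]
  constructor
  · intro h n
    rw [← Lmap_single N γ x n, h]
    rfl
  · intro h
    ext v
    have hv := pi_eq_sum_univ v
    have : Lmap N γ x v = ∑ n : ZMod N, v n * Lmap N γ x (Pi.single n 1) := by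
      conv_lhs => rw [hv]
      rw [map_sum]
      refine Finset.sum_congr rfl fun n _ => ?_
      rw [map_smul]
      have hs : (fun j => if n = j then (1:ℝ) else 0) = Pi.single n 1 := by
        funext j; simp [Pi.single_apply, eq_comm]
      rw [hs, smul_eq_mul]
    rw [ContinuousLinearMap.zero_apply, this]
    simp only [Lmap_single, h, mul_zero]
    exact Finset.sum_const_zero


/-- `x` is a stationary point of `V_γ` iff, with `uₙ = (x_{n+1} − x_{n−1})/2`,
the pairs `(xₙ,uₙ)` form a period-`N` orbit of the twist map `T₁`. -/
theorem statement4 (N : ℕ) [NeZero N] (hN : 2 ≤ N) (γ : ℝ) (hγ : 0 < γ)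
    (x : ZMod N → ℝ) :
    fderiv ℝ (V N γ) x = 0 ↔
      ∀ n : ZMod N,
        T1 γ (x n, (x (n+1) - x (n-1))/2) = (x (n+1), (x (n+1+1) - x n)/2) := by
  rw [grad_zero_iff]
  have hγ' : γ ≠ 0 := hγ.ne'
  constructor
  · intro h n
    have e1 := h n
    have e2 := h (n+1)
    have hx : x n + (x (n+1) - x (n-1))/2 - γ⁻¹ * fdrift (x n) = x (n+1) := by
      field_simp [fdrift]
      simp only [fdrift]
      linarith [e1]
    simp only [T1, Prod.mk.injEq, hx]
    refine ⟨trivial, ?_⟩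
    simp only [fdrift] at *
    simp only [add_sub_cancel_right] at e2
    field_simp
    linarith [e1, e2]
  · intro h n
    have e := congrArg Prod.fst (h n)
    simp only [T1, fdrift] at e
    field_simp at e
    nlinarith [e]
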